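/- Let A = λ/μ be a skew diagram and h = ℓ(π_nw(A)) the number of its nonempty northwest ribbons. Then every partition ν with c(λ; μ, ν) ≠ 0 has Durfee size d(ν) ≥ h, and this bound is attained: the minimal Durfee size among all ν with c(λ; μ, ν) ≠ 0 equals h (in particular the partitions ν with hl(ν) = π_nw(A) have Durfee size exactly h). -/

import Mathlib

open Finset

namespace SkewHooks

/-- The `i`-th principal hook length of a partition (0-indexed):
the hook length of the box `(i, i)`, or `0` if `(i,i)` is not in the diagram. -/
def hl (l : YoungDiagram) (i : ℕ) : ℕ := l.rowLen i + l.colLen i - (2 * i + 1)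

/-- The Durfee size of a partition: the side of the largest square contained in it. -/
def durfee (l : YoungDiagram) : ℕ :=
  ((Finset.range (l.card + 1)).filter (fun i => (i, i) ∈ l)).card

/-- The set of boxes of the skew diagram `l / m`. -/
def skewCells (l m : YoungDiagram) : Finset (ℕ × ℕ) := l.cells \ m.cells

/-- The first northwest ribbon of a set of boxes: all boxes `(i,j)` such that
`(i-1, j-1)` is not a box of the set. -/
def nw1 (A : Finset (ℕ × ℕ)) : Finset (ℕ × ℕ) :=
  A.filter (fun c => c.1 = 0 ∨ c.2 = 0 ∨ (c.1 - 1, c.2 - 1) ∉ A)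

/-- The set of boxes remaining after removing the first `k` northwest ribbons. -/
def nwRest (A : Finset (ℕ × ℕ)) : ℕ → Finset (ℕ × ℕ)
  | 0 => A
  | k + 1 => nwRest A k \ nw1 (nwRest A k)

/-- The `(k+1)`-st northwest ribbon (0-indexed `k`). -/
def nw (A : Finset (ℕ × ℕ)) (k : ℕ) : Finset (ℕ × ℕ) := nw1 (nwRest A k)

/-- The northwest ribbon length partition: `pinw A k = |nw_{k+1}(A)|` (0-indexed). -/
def pinw (A : Finset (ℕ × ℕ)) (k : ℕ) : ℕ := (nw A k).card

/-- `T` is a Littlewood-Richardson filling of the set of boxes `D` with content `ν`: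
a semistandard filling (weakly increasing rows, strictly increasing columns) with
positive entries, `ν k` entries equal to `k+1`, whose reverse reading word
(right to left, top to bottom) is a lattice word, and which is `0` outside `D`. -/
def IsLRFilling (D : Finset (ℕ × ℕ)) (ν : YoungDiagram) (T : ℕ × ℕ → ℕ) : Prop :=
  (∀ c, c ∉ D → T c = 0) ∧
  (∀ c ∈ D, 1 ≤ T c) ∧
  (∀ i j, (i, j) ∈ D → (i, j + 1) ∈ D → T (i, j) ≤ T (i, j + 1)) ∧
  (∀ i j, (i, j) ∈ D → (i + 1, j) ∈ D → T (i, j) < T (i + 1, j)) ∧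
  (∀ k, (D.filter (fun c => T c = k + 1)).card = ν.rowLen k) ∧
  (∀ i j k, (D.filter (fun c => (c.1 < i ∨ (c.1 = i ∧ j ≤ c.2)) ∧ T c = k + 2)).card ≤
    (D.filter (fun c => (c.1 < i ∨ (c.1 = i ∧ j ≤ c.2)) ∧ T c = k + 1)).card)

/-- The coefficient of `[ν]` in the skew character of the set of boxes `D`:
the number of LR fillings of `D` with content `ν`. -/
noncomputable def skewCoeff (D : Finset (ℕ × ℕ)) (ν : YoungDiagram) : ℕ :=
  Set.ncard {T : ℕ × ℕ → ℕ | IsLRFilling D ν T}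

/-- The Littlewood-Richardson coefficient `c(l; m, ν)`:
the number of LR tableaux of shape `l / m` and content `ν`. -/
noncomputable def lr (l m ν : YoungDiagram) : ℕ := skewCoeff (skewCells l m) ν

/-- Lexicographic order on sequences: `f ≤lex g`. -/
def lexLE (f g : ℕ → ℕ) : Prop :=
  f = g ∨ ∃ i, f i < g i ∧ ∀ j < i, f j = g j

/-- A set of boxes decomposes if it splits into two nonempty pieces sharing
no row and no column. -/
def Decomposes (A : Finset (ℕ × ℕ)) : Prop :=
  ∃ B C : Finset (ℕ × ℕ), B ∪ C = A ∧ B.Nonempty ∧ C.Nonempty ∧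
    ∀ b ∈ B, ∀ c ∈ C, b.1 ≠ c.1 ∧ b.2 ≠ c.2

/-- A set of boxes is connected if it is nonempty and does not decompose. -/
def Connected (A : Finset (ℕ × ℕ)) : Prop := A.Nonempty ∧ ¬ Decomposes A

section Geometry

/-- A set of boxes is box-closed. -/
def Boxed (D : Finset (ℕ × ℕ)) : Prop :=
  ∀ ⦃i1 j1 i2 j2 i j : ℕ⦄, (i1, j1) ∈ D → (i2, j2) ∈ D →
    i1 ≤ i → i ≤ i2 → j1 ≤ j → j ≤ j2 → (i, j) ∈ D

lemma mem_skewCells {lam mu : YoungDiagram} {c : ℕ × ℕ} :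
    c ∈ skewCells lam mu ↔ c ∈ lam ∧ c ∉ mu := by
  simp [skewCells, YoungDiagram.mem_cells]

lemma boxed_skewCells (lam mu : YoungDiagram) : Boxed (skewCells lam mu) := by
  intro i1 j1 i2 j2 i j h1 h2 hi1 hi2 hj1 hj2
  rw [mem_skewCells] at h1 h2 ⊢
  refine ⟨lam.up_left_mem hi2 hj2 h2.1, fun hm => h1.2 (mu.up_left_mem hi1 hj1 hm)⟩

/-- Column depth of a box. -/
def cdep (D : Finset (ℕ × ℕ)) (c : ℕ × ℕ) : ℕ :=
  ((Finset.range (c.1 + 1)).filter (fun t => (t, c.2) ∈ D)).card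

variable {D : Finset (ℕ × ℕ)}

lemma cdep_pos {c : ℕ × ℕ} (hc : c ∈ D) : 0 < cdep D c := by
  refine Finset.card_pos.2 ⟨c.1, ?_⟩
  simp [cdep, hc]

lemma cdep_le {c : ℕ × ℕ} : cdep D c ≤ c.1 + 1 := by
  classical
  calc cdep D c ≤ (range (c.1+1)).card := Finset.card_filter_le _ _
  _ = c.1 + 1 := card_range _

lemma col_interval (hD : Boxed D) {i j i' t : ℕ} (h1 : (i, j) ∈ D) (h2 : (i', j) ∈ D)
    (ht : i ≤ t) (ht' : t ≤ i') : (t, j) ∈ D :=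
  hD h1 h2 ht ht' le_rfl le_rfl

lemma exists_top (hD : Boxed D) {i j s : ℕ} (hc : (i, j) ∈ D) (hs : s < cdep D (i, j)) :
    (i - s, j) ∈ D := by
  classical
  by_contra hcon
  set F := (range (i + 1)).filter (fun t => (t, j) ∈ D) with hF
  have hsub : F ⊆ Ioc (i - s) i := by
    intro t ht
    rw [hF, mem_filter, mem_range] at ht
    rw [mem_Ioc]
    refine ⟨?_, by omega⟩
    by_contra hle
    push_neg at hle
    exact hcon (col_interval hD ht.2 hc hle (by omega))
  have := Finset.card_le_card hsub
  rw [Nat.card_Ioc] at this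
  have : cdep D (i, j) ≤ i - (i - s) := this
  omega

lemma cdep_succ (h2 : (i + 1, j) ∈ D) :
    cdep D (i + 1, j) = cdep D (i, j) + 1 := by
  classical
  show ((range (i+2)).filter (fun t => (t, j) ∈ D)).card = _
  rw [show i + 2 = (i+1) + 1 from rfl, Finset.range_add_one, Finset.filter_insert, if_pos h2,
    Finset.card_insert_of_notMem (by simp)]
  rfl

lemma cdep_col_mono (h : i ≤ i') : cdep D (i, j) ≤ cdep D (i', j) := by
  classical
  apply Finset.card_le_card
  apply Finset.filter_subset_filter
  intro t ht
  rw [mem_range] at *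
  omega

lemma cdep_sub (hD : Boxed D) {i j s : ℕ} (hc : (i, j) ∈ D) (hs : s < cdep D (i, j)) :
    cdep D (i - s, j) + s = cdep D (i, j) := by
  induction s with
  | zero => simp
  | succ s ih =>
    have hs' : s < cdep D (i, j) := by omega
    have hb : (i - s, j) ∈ D := exists_top hD hc hs'
    have hsis : s + 1 ≤ i := by
      have := cdep_le (D := D) (c := (i, j))
      simp at this
      omega
    have hstep : (i - s - 1) + 1 = i - s := by omega
    have ht : (i - (s+1), j) ∈ D := exists_top hD hc hs
    have h3 : cdep D ((i - s - 1) + 1, j) = cdep D (i - s - 1, j) + 1 := by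
      apply cdep_succ
      rw [hstep]; exact hb
    rw [hstep] at h3
    have : i - (s + 1) = i - s - 1 := by omega
    rw [this]
    omega

lemma cdep_row_mono (hD : Boxed D) {i j j' : ℕ} (h2 : (i, j') ∈ D) (hj : j ≤ j') :
    cdep D (i, j) ≤ cdep D (i, j') := by
  classical
  apply Finset.card_le_card
  intro t ht
  rw [mem_filter, mem_range] at *
  exact ⟨ht.1, hD ht.2 h2 le_rfl (by omega) hj le_rfl⟩

/-- Diagonal chains. -/
def Chain (D : Finset (ℕ × ℕ)) (k : ℕ) (c : ℕ × ℕ) : Prop :=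
  k ≤ c.1 ∧ k ≤ c.2 ∧ ∀ t ≤ k, (c.1 - t, c.2 - t) ∈ D

lemma mem_nwRest {A : Finset (ℕ × ℕ)} : ∀ {k : ℕ} {c : ℕ × ℕ}, c ∈ nwRest A k ↔ Chain A k c := by
  intro k
  induction k with
  | zero =>
    intro c
    simp only [nwRest, Chain, Nat.zero_le, Nat.le_zero, true_and]
    constructor
    · intro hc; intro t ht; subst ht; simpa using hc
    · intro hc; simpa using hc 0 rfl
  | succ k ih =>
    intro c
    show c ∈ nwRest A k \ nw1 (nwRest A k) ↔ _
    rw [Finset.mem_sdiff]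
    constructor
    · rintro ⟨hc, hn⟩
      rw [nw1, mem_filter] at hn
      push_neg at hn
      have hn' := hn hc
      obtain ⟨h1, h2, hd⟩ := hn'
      rw [ih] at hc hd
      obtain ⟨ha, hb, hch⟩ := hc
      obtain ⟨ha', hb', hch'⟩ := hd
      simp only at ha' hb'
      refine ⟨by omega, by omega, ?_⟩
      intro t ht
      rcases le_or_gt t k with h | h
      · exact hch t h
      · have htk : t = k + 1 := by omega
        have := hch' k le_rfl
        simpa [htk, show c.1 - 1 - k = c.1 - (k+1) by omega,
          show c.2 - 1 - k = c.2 - (k+1) by omega] using this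
    · rintro ⟨ha, hb, hch⟩
      have hc : c ∈ nwRest A k := by
        rw [ih]
        exact ⟨by omega, by omega, fun t ht => hch t (by omega)⟩
      refine ⟨hc, ?_⟩
      rw [nw1, mem_filter]
      push_neg
      intro _
      refine ⟨by omega, by omega, ?_⟩
      rw [ih]
      refine ⟨by omega, by omega, ?_⟩
      intro t ht
      have := hch (t+1) (by omega)
      simpa [show c.1 - 1 - t = c.1 - (t+1) by omega,
        show c.2 - 1 - t = c.2 - (t+1) by omega] using this

lemma nw1_nonempty {R : Finset (ℕ × ℕ)} (hne : R.Nonempty) : (nw1 R).Nonempty := by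
  classical
  obtain ⟨c, hc, hmin⟩ := Finset.exists_min_image R (fun c => c.1 + c.2) hne
  refine ⟨c, ?_⟩
  rw [nw1, mem_filter]
  refine ⟨hc, ?_⟩
  by_contra hcon
  push_neg at hcon
  obtain ⟨h1, h2, h3⟩ := hcon
  have := hmin _ h3
  simp at this
  omega

end Geometry

section SR

variable {E : Finset (ℕ × ℕ)}

/-- Row of a finset of boxes. -/
def rowF (E : Finset (ℕ × ℕ)) (i : ℕ) : Finset (ℕ × ℕ) := E.filter (fun c => c.1 = i)

def rlen (E : Finset (ℕ × ℕ)) (i : ℕ) : ℕ := (rowF E i).card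

def rhi (E : Finset (ℕ × ℕ)) (i : ℕ) : ℕ := (rowF E i).sup (fun c => c.2)

lemma mem_rowF {c : ℕ × ℕ} {i : ℕ} : c ∈ rowF E i ↔ c ∈ E ∧ c.1 = i := by
  simp [rowF]

lemma le_rhi {i j : ℕ} (h : (i, j) ∈ E) : j ≤ rhi E i :=
  Finset.le_sup (f := fun c => c.2) (mem_rowF.2 ⟨h, rfl⟩)

lemma rhi_mem {i j : ℕ} (h : (i, j) ∈ E) : (i, rhi E i) ∈ E := by
  obtain ⟨b, hb, hzb⟩ := Finset.exists_mem_eq_sup (rowF E i) ⟨(i, j), mem_rowF.2 ⟨h, rfl⟩⟩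
    (fun c => c.2)
  rw [mem_rowF] at hb
  have : (i, rhi E i) = b := by
    rw [show rhi E i = b.2 from hzb, ← hb.2]
  rw [this]; exact hb.1

lemma row_right (hE : Boxed E) {i j x : ℕ} (h : (i, j) ∈ E) (hx : j ≤ x) (hx2 : x ≤ rhi E i) :
    (i, x) ∈ E :=
  hE h (rhi_mem h) le_rfl le_rfl hx hx2

lemma rhi_sub_lt_rlen (hE : Boxed E) {i j : ℕ} (h : (i, j) ∈ E) : rhi E i - j < rlen E i := by
  classical
  have hinj : (Finset.Icc j (rhi E i)).card ≤ rlen E i := by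
    apply Finset.card_le_card_of_injOn (fun x => (i, x))
    · intro x hx
      rw [Finset.mem_coe, Finset.mem_Icc] at hx
      exact mem_rowF.2 ⟨row_right hE h hx.1 hx.2, rfl⟩
    · intro a _ b _ hab
      simpa using hab
  rw [Nat.card_Icc] at hinj
  have := le_rhi h
  omega

lemma rlen_le_rhi {i j : ℕ} (h : (i, j) ∈ E) : rlen E i ≤ rhi E i + 1 := by
  classical
  have : rlen E i ≤ (Finset.Icc 0 (rhi E i)).card := by
    apply Finset.card_le_card_of_injOn (fun c => c.2)
    · intro c hc
      rw [Finset.mem_coe, mem_rowF] at hc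
      rw [Finset.mem_coe, Finset.mem_Icc]
      refine ⟨Nat.zero_le _, ?_⟩
      have : (i, c.2) ∈ E := by rw [← hc.2]; exact hc.1
      exact le_rhi this
    · intro a ha b hb hab
      rw [Finset.mem_coe, mem_rowF] at ha hb
      exact Prod.ext (ha.2.trans hb.2.symm) hab
  rw [Nat.card_Icc] at this
  omega

lemma row_left (hE : Boxed E) {i j t : ℕ} (h : (i, j) ∈ E) (ht : t < rlen E i) :
    (i, rhi E i - t) ∈ E := by
  classical
  by_cases hex : ∃ c ∈ rowF E i, c.2 ≤ rhi E i - t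
  · obtain ⟨c, hc, hle⟩ := hex
    rw [mem_rowF] at hc
    have hcE : (i, c.2) ∈ E := by rw [← hc.2]; exact hc.1
    exact row_right hE hcE hle (Nat.sub_le _ _)
  · push_neg at hex
    exfalso
    have : rlen E i ≤ (Finset.Ioc (rhi E i - t) (rhi E i)).card := by
      apply Finset.card_le_card_of_injOn (fun c => c.2)
      · intro c hc
        rw [Finset.mem_coe, Finset.mem_Ioc]
        refine ⟨hex c hc, ?_⟩
        rw [Finset.mem_coe, mem_rowF] at hc
        have : (i, c.2) ∈ E := by rw [← hc.2]; exact hc.1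
        exact le_rhi this
      · intro a ha b hb hab
        rw [Finset.mem_coe, mem_rowF] at ha hb
        exact Prod.ext (ha.2.trans hb.2.symm) hab
    rw [Nat.card_Ioc] at this
    omega

/-- The sorted-row-lengths filling. -/
def srT (E : Finset (ℕ × ℕ)) (c : ℕ × ℕ) : ℕ :=
  1 + ((range c.1).filter (fun i' => rhi E c.1 - c.2 < rlen E i')).card

lemma srT_pos (c : ℕ × ℕ) : 1 ≤ srT E c := Nat.le_add_right 1 _

lemma srT_row_mono {i j j' : ℕ} (hj : j ≤ j') : srT E (i, j) ≤ srT E (i, j') := by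
  apply Nat.add_le_add_left
  apply Finset.card_le_card
  intro x hx
  simp only [mem_filter, mem_range] at hx ⊢
  exact ⟨hx.1, by omega⟩

lemma srT_col (hE : Boxed E) {i j : ℕ} (h1 : (i, j) ∈ E) (h2 : (i + 1, j) ∈ E) :
    srT E (i, j) < srT E (i + 1, j) := by
  classical
  have hhi : rhi E (i + 1) ≤ rhi E i := by
    have hm : (i + 1, rhi E (i+1)) ∈ E := rhi_mem h2
    have : (i, rhi E (i+1)) ∈ E := hE h1 hm le_rfl (Nat.le_succ _) (le_rhi h2) le_rfl
    exact le_rhi this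
  have hsub : insert i ((range i).filter (fun i' => rhi E i - j < rlen E i')) ⊆
      (range (i+1)).filter (fun i' => rhi E (i+1) - j < rlen E i') := by
    intro x hx
    rw [Finset.mem_insert] at hx
    rw [mem_filter, mem_range]
    rcases hx with rfl | hx
    · refine ⟨Nat.lt_succ_self _, ?_⟩
      have := rhi_sub_lt_rlen hE h1
      omega
    · rw [mem_filter, mem_range] at hx
      refine ⟨by omega, by omega⟩
  have hcard := Finset.card_le_card hsub
  rw [Finset.card_insert_of_notMem (by simp)] at hcard
  simp only [srT]
  omega

lemma srT_col_chain (hE : Boxed E) {i i' j : ℕ} (h1 : (i, j) ∈ E) (h2 : (i', j) ∈ E)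
    (hii : i < i') : srT E (i, j) < srT E (i', j) := by
  induction i' with
  | zero => omega
  | succ n ih =>
    rcases Nat.lt_or_ge i n with hlt | hge
    · have hn : (n, j) ∈ E := hE h1 h2 (by omega) (by omega) le_rfl le_rfl
      exact lt_trans (ih hn hlt) (srT_col hE hn h2)
    · have : i = n := by omega
      subst this
      exact srT_col hE h1 h2

/-- index of the previous row used in the lattice injection. -/
def ist (E : Finset (ℕ × ℕ)) (c : ℕ × ℕ) : ℕ :=
  (((range c.1).filter (fun i' => rhi E c.1 - c.2 < rlen E i'))).sup id

lemma ist_spec {c : ℕ × ℕ} (hv : 2 ≤ srT E c) :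
    ist E c ∈ (range c.1).filter (fun i' => rhi E c.1 - c.2 < rlen E i') ∧
    ∀ x ∈ (range c.1).filter (fun i' => rhi E c.1 - c.2 < rlen E i'), x ≤ ist E c := by
  classical
  have hne : ((range c.1).filter (fun i' => rhi E c.1 - c.2 < rlen E i')).Nonempty := by
    rw [← Finset.card_pos]
    simp only [srT] at hv
    omega
  obtain ⟨b, hb, hzb⟩ := Finset.exists_mem_eq_sup _ hne id
  constructor
  · show ist E c ∈ _
    rw [show ist E c = id b from hzb]
    exact hb
  · intro x hx
    exact Finset.le_sup (f := id) hx

/-- The lattice-injection map. -/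
def phiSR (E : Finset (ℕ × ℕ)) (c : ℕ × ℕ) : ℕ × ℕ :=
  (ist E c, rhi E (ist E c) - (rhi E c.1 - c.2))

lemma phiSR_spec (hE : Boxed E) {c : ℕ × ℕ} (hc : c ∈ E) (hv : 2 ≤ srT E c) :
    phiSR E c ∈ E ∧ ist E c < c.1 ∧ srT E (phiSR E c) + 1 = srT E c := by
  classical
  obtain ⟨hmem, hmax⟩ := ist_spec (E := E) hv
  rw [mem_filter, mem_range] at hmem
  set t := rhi E c.1 - c.2 with hT
  set a := ist E c with ha
  have htlen : t < rlen E a := hmem.2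
  have hrow : ∃ w, (a, w) ∈ E := by
    have : 0 < rlen E a := by omega
    rw [rlen, Finset.card_pos] at this
    obtain ⟨w, hw⟩ := this
    rw [mem_rowF] at hw
    exact ⟨w.2, by rw [← hw.2]; exact hw.1⟩
  obtain ⟨w, hw⟩ := hrow
  have hmemE : (a, rhi E a - t) ∈ E := row_left hE hw htlen
  have htle : t ≤ rhi E a := by
    have := rlen_le_rhi hw
    omega
  refine ⟨hmemE, hmem.1, ?_⟩
  -- value computation
  have hteq : rhi E a - (rhi E a - t) = t := by omega
  have hset : (range a).filter (fun i' => rhi E a - (rhi E a - t) < rlen E i') =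
      ((range c.1).filter (fun i' => t < rlen E i')).erase a := by
    ext x
    rw [mem_filter, mem_range, Finset.mem_erase, mem_filter, mem_range]
    simp only [hteq]
    constructor
    · intro hx
      refine ⟨by omega, by omega, hx.2⟩
    · rintro ⟨hne, hxc, hlen⟩
      have := hmax x (by rw [mem_filter, mem_range]; exact ⟨hxc, hlen⟩)
      exact ⟨by omega, hlen⟩
  have hval : srT E ((a : ℕ), rhi E a - t) + 1 = srT E c := by
    simp only [srT]
    simp only [← hT]
    rw [hset, Finset.card_erase_of_mem (by rw [mem_filter, mem_range]; exact ⟨hmem.1, htlen⟩)]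
    have hcard : 0 < ((range c.1).filter (fun i' => t < rlen E i')).card :=
      Finset.card_pos.2 ⟨a, by rw [mem_filter, mem_range]; exact ⟨hmem.1, htlen⟩⟩
    omega
  exact hval

lemma srT_lattice (hE : Boxed E) (a b k : ℕ) :
    ((E.filter (fun c => (c.1 < a ∨ (c.1 = a ∧ b ≤ c.2)) ∧ srT E c = k + 2)).card ≤
      (E.filter (fun c => (c.1 < a ∨ (c.1 = a ∧ b ≤ c.2)) ∧ srT E c = k + 1)).card) := by
  classical
  apply Finset.card_le_card_of_injOn (phiSR E)
  · intro c hc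
    rw [Finset.mem_coe, mem_filter] at hc
    obtain ⟨hcE, hreg, hval⟩ := hc
    obtain ⟨hmem, hlt, hveq⟩ := phiSR_spec hE hcE (by omega)
    rw [Finset.mem_coe, mem_filter]
    refine ⟨hmem, ?_, by omega⟩
    left
    show ist E c < a
    rcases hreg with h | h
    · omega
    · omega
  · intro c1 hc1 c2 hc2 heq
    rw [Finset.mem_coe, mem_filter] at hc1 hc2
    obtain ⟨hc1E, _, hval1⟩ := hc1
    obtain ⟨hc2E, _, hval2⟩ := hc2
    obtain ⟨hmem1, hmax1⟩ := ist_spec (E := E) (c := c1) (by omega)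
    obtain ⟨hmem2, hmax2⟩ := ist_spec (E := E) (c := c2) (by omega)
    rw [mem_filter, mem_range] at hmem1 hmem2
    have hfst : ist E c1 = ist E c2 := congrArg Prod.fst heq
    rw [← hfst] at hmem2 hmax2
    have hsnd : rhi E (ist E c1) - (rhi E c1.1 - c1.2) =
        rhi E (ist E c1) - (rhi E c2.1 - c2.2) := by
      have := congrArg Prod.snd heq
      simp only [phiSR] at this
      rw [← hfst] at this
      exact this
    have hw1 : ∃ w, ((ist E c1 : ℕ), w) ∈ E := by
      have : 0 < rlen E (ist E c1) := by omega
      rw [rlen, Finset.card_pos] at this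
      obtain ⟨w, hw⟩ := this
      rw [mem_rowF] at hw
      exact ⟨w.2, by rw [← hw.2]; exact hw.1⟩
    obtain ⟨w, hw⟩ := hw1
    have hrl := rlen_le_rhi hw
    have hteq : rhi E c1.1 - c1.2 = rhi E c2.1 - c2.2 := by omega
    have hrows : c1.1 = c2.1 := by
      rcases lt_trichotomy c1.1 c2.1 with hlt | heqr | hgt
      · exfalso
        have h1len : rhi E c1.1 - c1.2 < rlen E c1.1 :=
          rhi_sub_lt_rlen hE (by rw [Prod.mk.eta]; exact hc1E)
        have := hmax2 c1.1 (by
          rw [mem_filter, mem_range]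
          exact ⟨hlt, by rw [← hteq]; exact h1len⟩)
        omega
      · exact heqr
      · exfalso
        have h2len : rhi E c2.1 - c2.2 < rlen E c2.1 :=
          rhi_sub_lt_rlen hE (by rw [Prod.mk.eta]; exact hc2E)
        have := hmax1 c2.1 (by
          rw [mem_filter, mem_range]
          exact ⟨hgt, by rw [hteq]; exact h2len⟩)
        omega
    have hcol : c1.2 = c2.2 := by
      have e1 : c1.2 ≤ rhi E c1.1 := le_rhi (by rw [Prod.mk.eta]; exact hc1E)
      have e2 : c2.2 ≤ rhi E c2.1 := le_rhi (by rw [Prod.mk.eta]; exact hc2E)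
      rw [← hrows] at e2 hteq
      omega
    exact Prod.ext hrows hcol

lemma srT_one_bound (hE : Boxed E) {m : ℕ} (hm : ∀ i, rlen E i ≤ m) :
    (E.filter (fun c => srT E c = 1)).card ≤ m := by
  classical
  have : (E.filter (fun c => srT E c = 1)).card ≤ (range m).card := by
    apply Finset.card_le_card_of_injOn (fun c => rhi E c.1 - c.2)
    · intro c hc
      rw [Finset.mem_coe, mem_filter] at hc
      rw [Finset.mem_coe, mem_range]
      dsimp only
      have : (c.1, c.2) ∈ E := by rw [Prod.mk.eta]; exact hc.1
      have := rhi_sub_lt_rlen hE this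
      have := hm c.1
      omega
    · intro c1 hc1 c2 hc2 heq
      rw [Finset.mem_coe, mem_filter] at hc1 hc2
      have m1 : (c1.1, c1.2) ∈ E := by rw [Prod.mk.eta]; exact hc1.1
      have m2 : (c2.1, c2.2) ∈ E := by rw [Prod.mk.eta]; exact hc2.1
      have hrows : c1.1 = c2.1 := by
        rcases lt_trichotomy c1.1 c2.1 with hlt | heqr | hgt
        · exfalso
          have : ((range c2.1).filter (fun i' => rhi E c2.1 - c2.2 < rlen E i')).card = 0 := by
            have := hc2.2
            simp only [srT] at this
            omega
          rw [Finset.card_eq_zero] at this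
          have hmem : c1.1 ∈ (range c2.1).filter (fun i' => rhi E c2.1 - c2.2 < rlen E i') := by
            rw [mem_filter, mem_range]
            refine ⟨hlt, ?_⟩
            have heq' : rhi E c1.1 - c1.2 = rhi E c2.1 - c2.2 := heq
            rw [← heq']
            exact rhi_sub_lt_rlen hE m1
          rw [this] at hmem
          exact absurd hmem (Finset.notMem_empty _)
        · exact heqr
        · exfalso
          have : ((range c1.1).filter (fun i' => rhi E c1.1 - c1.2 < rlen E i')).card = 0 := by
            have := hc1.2
            simp only [srT] at this
            omega
          rw [Finset.card_eq_zero] at this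
          have hmem : c2.1 ∈ (range c1.1).filter (fun i' => rhi E c1.1 - c1.2 < rlen E i') := by
            rw [mem_filter, mem_range]
            refine ⟨hgt, ?_⟩
            have heq' : rhi E c1.1 - c1.2 = rhi E c2.1 - c2.2 := heq
            rw [heq']
            exact rhi_sub_lt_rlen hE m2
          rw [this] at hmem
          exact absurd hmem (Finset.notMem_empty _)
      have hcol : c1.2 = c2.2 := by
        have heq' : rhi E c1.1 - c1.2 = rhi E c2.1 - c2.2 := heq
        have e1 := le_rhi m1
        have e2 := le_rhi m2
        rw [← hrows] at e2 heq'
        omega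
      exact Prod.ext hrows hcol
  rw [card_range] at this
  exact this

lemma srT_le_card {c : ℕ × ℕ} : srT E c ≤ 1 + E.card := by
  classical
  apply Nat.add_le_add_left
  apply Finset.card_le_card_of_injOn (fun i' => ((i' : ℕ), rhi E i'))
  · intro x hx
    rw [Finset.mem_coe, mem_filter] at hx
    have : 0 < rlen E x := by omega
    rw [rlen, Finset.card_pos] at this
    obtain ⟨w, hw⟩ := this
    rw [mem_rowF] at hw
    have : (x, w.2) ∈ E := by rw [← hw.2]; exact hw.1
    exact rhi_mem this
  · intro a _ b _ hab
    exact congrArg Prod.fst hab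

end SR

section Glue

variable {D : Finset (ℕ × ℕ)} {h : ℕ}

/-- The deep part of `D`. -/
def BB (D : Finset (ℕ × ℕ)) (h : ℕ) : Finset (ℕ × ℕ) := D.filter (fun c => h < cdep D c)

/-- The minimal-Durfee LR filling of a box-closed set without `(h+1)`-square. -/
def gT (D : Finset (ℕ × ℕ)) (h : ℕ) (c : ℕ × ℕ) : ℕ :=
  if c ∈ D then (if cdep D c ≤ h then cdep D c else h + srT (BB D h) c) else 0

lemma mem_BB {c : ℕ × ℕ} : c ∈ BB D h ↔ c ∈ D ∧ h < cdep D c := by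
  simp [BB]

lemma boxed_BB (hD : Boxed D) : Boxed (BB D h) := by
  intro i1 j1 i2 j2 i j h1 h2 hi1 hi2 hj1 hj2
  rw [mem_BB] at h1 h2 ⊢
  have hmid : (i, j) ∈ D := hD h1.1 h2.1 hi1 hi2 hj1 hj2
  have hij1 : (i1, j) ∈ D := hD h1.1 h2.1 le_rfl (le_trans hi1 hi2) hj1 hj2
  refine ⟨hmid, ?_⟩
  calc h < cdep D (i1, j1) := h1.2
  _ ≤ cdep D (i1, j) := cdep_row_mono hD hij1 hj1
  _ ≤ cdep D (i, j) := cdep_col_mono hi1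

lemma rlen_BB_le (hD : Boxed D) (hnch : ∀ c, ¬ Chain D h c) (i : ℕ) :
    rlen (BB D h) i ≤ h := by
  by_contra hcon
  push_neg at hcon
  have hne : 0 < rlen (BB D h) i := by omega
  rw [rlen, Finset.card_pos] at hne
  obtain ⟨w0, hw0⟩ := hne
  rw [mem_rowF] at hw0
  have hw : (i, w0.2) ∈ BB D h := by rw [← hw0.2]; exact hw0.1
  have hjm : (i, rhi (BB D h) i) ∈ BB D h := rhi_mem hw
  have hj0 : (i, rhi (BB D h) i - h) ∈ BB D h := row_left (boxed_BB hD) hw hcon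
  have hmle : h ≤ rhi (BB D h) i := by
    have := rlen_le_rhi hw
    omega
  set jm := rhi (BB D h) i
  rw [mem_BB] at hj0 hjm
  have hih : h ≤ i := by
    have h1 := cdep_le (D := D) (c := (i, jm - h))
    have := hj0.2
    simp only at h1
    omega
  have hcorner : (i - h, jm - h) ∈ D := exists_top hD hj0.1 (by omega)
  apply hnch (i, jm)
  refine ⟨hih, hmle, ?_⟩
  intro t ht
  exact hD hcorner hjm.1 (by omega) (by omega) (by omega) (by omega)

lemma gT_row (hD : Boxed D) {i j : ℕ} (h1 : (i, j) ∈ D) (h2 : (i, j + 1) ∈ D) :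
    gT D h (i, j) ≤ gT D h (i, j + 1) := by
  rw [gT, gT, if_pos h1, if_pos h2]
  by_cases hc2 : cdep D (i, j + 1) ≤ h
  · have hc1 : cdep D (i, j) ≤ h := le_trans (cdep_row_mono hD h2 (by omega)) hc2
    rw [if_pos hc1, if_pos hc2]
    exact cdep_row_mono hD h2 (by omega)
  · rw [if_neg hc2]
    by_cases hc1 : cdep D (i, j) ≤ h
    · rw [if_pos hc1]
      have := srT_pos (E := BB D h) (i, j + 1)
      omega
    · rw [if_neg hc1]
      have := srT_row_mono (E := BB D h) (i := i) (j := j) (j' := j + 1) (by omega)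
      omega

lemma gT_col (hD : Boxed D) {i j : ℕ} (h1 : (i, j) ∈ D) (h2 : (i + 1, j) ∈ D) :
    gT D h (i, j) < gT D h (i + 1, j) := by
  rw [gT, gT, if_pos h1, if_pos h2]
  have hstep : cdep D (i + 1, j) = cdep D (i, j) + 1 := cdep_succ h2
  by_cases hc2 : cdep D (i + 1, j) ≤ h
  · have hc1 : cdep D (i, j) ≤ h := by omega
    rw [if_pos hc1, if_pos hc2]
    omega
  · rw [if_neg hc2]
    by_cases hc1 : cdep D (i, j) ≤ h
    · rw [if_pos hc1]
      have := srT_pos (E := BB D h) (i + 1, j)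
      omega
    · rw [if_neg hc1]
      have hm1 : (i, j) ∈ BB D h := mem_BB.2 ⟨h1, by omega⟩
      have hm2 : (i + 1, j) ∈ BB D h := mem_BB.2 ⟨h2, by omega⟩
      have := srT_col (boxed_BB hD) hm1 hm2
      omega

lemma filter_gT_low {P : ℕ × ℕ → Prop} [DecidablePred P] {v : ℕ} (hv1 : 1 ≤ v) (hv : v ≤ h) :
    D.filter (fun c => P c ∧ gT D h c = v) = D.filter (fun c => P c ∧ cdep D c = v) := by
  ext c
  simp only [mem_filter]
  constructor
  · rintro ⟨hcD, hP, hval⟩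
    rw [gT, if_pos hcD] at hval
    by_cases hc : cdep D c ≤ h
    · rw [if_pos hc] at hval; exact ⟨hcD, hP, hval⟩
    · rw [if_neg hc] at hval
      have := srT_pos (E := BB D h) c
      omega
  · rintro ⟨hcD, hP, hval⟩
    refine ⟨hcD, hP, ?_⟩
    rw [gT, if_pos hcD, if_pos (by omega)]
    exact hval

lemma filter_gT_high {P : ℕ × ℕ → Prop} [DecidablePred P] {s : ℕ} (hs : 1 ≤ s) :
    D.filter (fun c => P c ∧ gT D h c = h + s) =
      (BB D h).filter (fun c => P c ∧ srT (BB D h) c = s) := by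
  ext c
  simp only [mem_filter, mem_BB]
  constructor
  · rintro ⟨hcD, hP, hval⟩
    rw [gT, if_pos hcD] at hval
    by_cases hc : cdep D c ≤ h
    · rw [if_pos hc] at hval; omega
    · rw [if_neg hc] at hval
      exact ⟨⟨hcD, by omega⟩, hP, by omega⟩
  · rintro ⟨⟨hcD, hc⟩, hP, hval⟩
    refine ⟨hcD, hP, ?_⟩
    rw [gT, if_pos hcD, if_neg (by omega)]
    omega

lemma glue_lattice (hD : Boxed D) (hnch : ∀ c, ¬ Chain D h c) (a b k : ℕ) :
    (D.filter (fun c => (c.1 < a ∨ (c.1 = a ∧ b ≤ c.2)) ∧ gT D h c = k + 2)).card ≤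
      (D.filter (fun c => (c.1 < a ∨ (c.1 = a ∧ b ≤ c.2)) ∧ gT D h c = k + 1)).card := by
  classical
  rcases Nat.lt_or_ge (k + 2) (h + 1) with hlow | hrest
  · -- both values ≤ h : use the column-depth injection
    rw [filter_gT_low (by omega) (by omega), filter_gT_low (by omega) (by omega)]
    apply Finset.card_le_card_of_injOn (fun c => (c.1 - 1, c.2))
    · intro c hc
      rw [Finset.mem_coe, mem_filter] at hc
      obtain ⟨hcD, hreg, hval⟩ := hc
      have hceta : (c.1, c.2) ∈ D := by rw [Prod.mk.eta]; exact hcD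
      have heta0 : cdep D (c.1, c.2) = cdep D c := by rw [Prod.mk.eta]
      have hc1 : 1 ≤ c.1 := by
        have := cdep_le (D := D) (c := c)
        omega
      have hup : (c.1 - 1, c.2) ∈ D := exists_top hD hceta (by omega)
      have hcd : cdep D (c.1 - 1, c.2) + 1 = cdep D (c.1, c.2) := by
        have := cdep_sub hD hceta (s := 1) (by omega)
        omega
      rw [Finset.mem_coe, mem_filter]
      refine ⟨hup, Or.inl ?_, ?_⟩
      · show c.1 - 1 < a
        rcases hreg with hx | hx <;> omega
      · show cdep D (c.1 - 1, c.2) = k + 1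
        have heta : cdep D (c.1, c.2) = cdep D c := by rw [Prod.mk.eta]
        omega
    · intro c1 hc1 c2 hc2 heq
      rw [Finset.mem_coe, mem_filter] at hc1 hc2
      have heq' : (c1.1 - 1, c1.2) = (c2.1 - 1, c2.2) := heq
      rw [Prod.mk.injEq] at heq'
      have e1 : 1 ≤ c1.1 := by
        have := cdep_le (D := D) (c := c1); omega
      have e2 : 1 ≤ c2.1 := by
        have := cdep_le (D := D) (c := c2); omega
      exact Prod.ext (by omega) heq'.2
  · rcases Nat.lt_or_ge (k + 1) (h + 1) with hmid | hhigh
    · -- k + 2 = h + 1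
      have hk : k + 1 = h := by omega
      rw [show k + 2 = h + 1 by omega, filter_gT_high (le_refl 1),
        show k + 1 = h by omega]
      rw [filter_gT_low (by omega) (le_refl h)]
      apply Finset.card_le_card_of_injOn (fun c => (c.1 - (cdep D c - h), c.2))
      · intro c hc
        rw [Finset.mem_coe, mem_filter, mem_BB] at hc
        obtain ⟨⟨hcD, hdeep⟩, hreg, hval⟩ := hc
        have hceta : (c.1, c.2) ∈ D := by rw [Prod.mk.eta]; exact hcD
        set s := cdep D c - h with hsdef
        have hs1 : 1 ≤ s := by omega
        have hscd : s < cdep D (c.1, c.2) := by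
          rw [Prod.mk.eta]; omega
        have hup : (c.1 - s, c.2) ∈ D := exists_top hD hceta hscd
        have hcd : cdep D (c.1 - s, c.2) + s = cdep D (c.1, c.2) := cdep_sub hD hceta hscd
        have hsc1 : s ≤ c.1 := by
          have := cdep_le (D := D) (c := c)
          omega
        rw [Finset.mem_coe, mem_filter]
        refine ⟨hup, Or.inl ?_, ?_⟩
        · show c.1 - s < a
          rcases hreg with hx | hx <;> omega
        · show cdep D (c.1 - s, c.2) = h
          have heta : cdep D (c.1, c.2) = cdep D c := by rw [Prod.mk.eta]
          omega
      · intro c1 hc1 c2 hc2 heq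
        rw [Finset.mem_coe, mem_filter, mem_BB] at hc1 hc2
        have heq' : (c1.1 - (cdep D c1 - h), c1.2) = (c2.1 - (cdep D c2 - h), c2.2) := heq
        rw [Prod.mk.injEq] at heq'
        have hsnd : c1.2 = c2.2 := heq'.2
        have hm1 : (c1.1, c1.2) ∈ BB D h := by
          rw [Prod.mk.eta, mem_BB]; exact hc1.1
        have hm2 : (c2.1, c2.2) ∈ BB D h := by
          rw [Prod.mk.eta, mem_BB]; exact hc2.1
        rw [hsnd] at hm1
        have hrows : c1.1 = c2.1 := by
          rcases lt_trichotomy c1.1 c2.1 with hlt | heqr | hgt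
          · exfalso
            have := srT_col_chain (boxed_BB hD) hm1 hm2 hlt
            have v1 := hc1.2.2
            have v2 := hc2.2.2
            rw [show ((c1.1, c2.2) : ℕ × ℕ) = c1 by rw [← hsnd, Prod.mk.eta]] at this
            rw [show ((c2.1, c2.2) : ℕ × ℕ) = c2 by rw [Prod.mk.eta]] at this
            omega
          · exact heqr
          · exfalso
            have := srT_col_chain (boxed_BB hD) hm2 hm1 hgt
            have v1 := hc1.2.2
            have v2 := hc2.2.2
            rw [show ((c1.1, c2.2) : ℕ × ℕ) = c1 by rw [← hsnd, Prod.mk.eta]] at this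
            rw [show ((c2.1, c2.2) : ℕ × ℕ) = c2 by rw [Prod.mk.eta]] at this
            omega
        exact Prod.ext hrows hsnd
    · -- k + 1 ≥ h + 1
      rw [show k + 2 = h + (k + 2 - h) by omega, filter_gT_high (by omega),
        show k + 1 = h + (k + 1 - h) by omega, filter_gT_high (by omega)]
      have := srT_lattice (boxed_BB (h := h) hD) a b (k - h)
      rw [show k - h + 2 = k + 2 - h by omega, show k - h + 1 = k + 1 - h by omega] at this
      exact this

end Glue

section GlueAssemble

variable {D : Finset (ℕ × ℕ)} {h : ℕ}

/-- Count of boxes with a given value. -/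
def Ncount (D : Finset (ℕ × ℕ)) (h v : ℕ) : ℕ := (D.filter (fun c => gT D h c = v)).card

lemma region_filter_all {T : ℕ × ℕ → ℕ} (w : ℕ) :
    D.filter (fun c => (c.1 < (D.sup Prod.fst) + 1 ∨ (c.1 = (D.sup Prod.fst) + 1 ∧ 0 ≤ c.2))
      ∧ T c = w) = D.filter (fun c => T c = w) := by
  apply Finset.filter_congr
  intro c hc
  have : c.1 ≤ D.sup Prod.fst := Finset.le_sup (f := Prod.fst) hc
  constructor
  · rintro ⟨_, hw⟩; exact hw
  · intro hw
    exact ⟨Or.inl (by omega), hw⟩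

lemma glue_lattice_all (hD : Boxed D) (hnch : ∀ c, ¬ Chain D h c) (k : ℕ) :
    Ncount D h (k + 2) ≤ Ncount D h (k + 1) := by
  have := glue_lattice hD hnch ((D.sup Prod.fst) + 1) 0 k
  rw [region_filter_all, region_filter_all] at this
  exact this

lemma Ncount_anti (hD : Boxed D) (hnch : ∀ c, ¬ Chain D h c) :
    ∀ v w, 1 ≤ v → v ≤ w → Ncount D h w ≤ Ncount D h v := by
  have key : ∀ d v, 1 ≤ v → Ncount D h (v + d) ≤ Ncount D h v := by
    intro d
    induction d with
    | zero => intro v _; simp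
    | succ n ih =>
      intro v hv
      have h1 : Ncount D h (v + (n + 1)) ≤ Ncount D h (v + n) := by
        have := glue_lattice_all hD hnch (v + n - 1)
        rw [show v + n - 1 + 2 = v + (n+1) by omega, show v + n - 1 + 1 = v + n by omega] at this
        exact this
      exact le_trans h1 (ih v hv)
  intro v w hv hvw
  have := key (w - v) v hv
  rw [show v + (w - v) = w by omega] at this
  exact this

lemma Ncount_h1_le (hD : Boxed D) (hnch : ∀ c, ¬ Chain D h c) :
    Ncount D h (h + 1) ≤ h := by
  classical
  have hset := filter_gT_high (D := D) (h := h) (P := fun _ => True) (s := 1) (le_refl 1)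
  simp only [true_and] at hset
  rw [Ncount, hset]
  exact srT_one_bound (boxed_BB hD) (rlen_BB_le hD hnch)

lemma gT_le (c : ℕ × ℕ) : gT D h c ≤ h + 1 + D.card := by
  rw [gT]
  by_cases hc : c ∈ D
  · rw [if_pos hc]
    by_cases hcd : cdep D c ≤ h
    · rw [if_pos hcd]; omega
    · rw [if_neg hcd]
      have h1 : srT (BB D h) c ≤ 1 + (BB D h).card := srT_le_card
      have h2 : (BB D h).card ≤ D.card := Finset.card_le_card (Finset.filter_subset _ _)
      omega
  · rw [if_neg hc]; omega

lemma durfee_le_of {ν : YoungDiagram} {m : ℕ} (hm : ∀ i, (i, i) ∈ ν → i < m) :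
    durfee ν ≤ m := by
  classical
  rw [durfee]
  calc ((range (ν.card + 1)).filter (fun i => (i, i) ∈ ν)).card
      ≤ (range m).card := by
        apply Finset.card_le_card
        intro i hi
        rw [mem_filter] at hi
        rw [mem_range]
        exact hm i hi.2
  _ = m := card_range m

lemma durfee_ge_of {ν : YoungDiagram} {m : ℕ} (hm : ∀ i, i < m → (i, i) ∈ ν) :
    m ≤ durfee ν := by
  classical
  have hcard : m ≤ ν.card := by
    rw [YoungDiagram.card]
    calc m = (range m).card := (card_range m).symm
    _ ≤ ν.cells.card := by
      apply Finset.card_le_card_of_injOn (fun i => (i, i))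
      · intro i hi
        rw [Finset.mem_coe, mem_range] at hi
        rw [Finset.mem_coe, YoungDiagram.mem_cells]
        exact hm i hi
      · intro a _ b _ hab
        exact congrArg Prod.fst hab
  rw [durfee]
  calc m = (range m).card := (card_range m).symm
  _ ≤ _ := by
    apply Finset.card_le_card
    intro i hi
    rw [mem_range] at hi
    rw [mem_filter, mem_range]
    exact ⟨by omega, hm i hi⟩

/-- Existence of the glued LR filling with small Durfee size. -/
lemma glue_exists (hD : Boxed D) (hnch : ∀ c, ¬ Chain D h c) :
    ∃ ν : YoungDiagram, IsLRFilling D ν (gT D h) ∧ durfee ν ≤ h := by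
  classical
  have hNle : ∀ v, Ncount D h v ≤ D.card :=
    fun v => Finset.card_le_card (Finset.filter_subset _ _)
  have hNzero : ∀ v, h + 1 + D.card < v → Ncount D h v = 0 := by
    intro v hv
    rw [Ncount, Finset.card_eq_zero]
    rw [Finset.filter_eq_empty_iff]
    intro c hc
    have := gT_le (D := D) (h := h) c
    omega
  have hlow : IsLowerSet ((((range (h + D.card + 2)) ×ˢ (range (D.card + 1))).filter
     (fun p => p.2 < Ncount D h (p.1 + 1))) : Set (ℕ × ℕ)) := by
    intro a b hab hamem
    rw [Prod.le_def] at hab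
    rw [Finset.mem_coe, mem_filter, Finset.mem_product, mem_range, mem_range] at hamem ⊢
    obtain ⟨⟨ha1, ha2⟩, haN⟩ := hamem
    obtain ⟨hb1, hb2⟩ := hab
    have hanti : Ncount D h (a.1 + 1) ≤ Ncount D h (b.1 + 1) :=
      Ncount_anti hD hnch _ _ (by omega) (by omega)
    exact ⟨⟨by omega, by omega⟩, by omega⟩
  set ν : YoungDiagram := ⟨((range (h + D.card + 2)) ×ˢ (range (D.card + 1))).filter
     (fun p => p.2 < Ncount D h (p.1 + 1)), hlow⟩ with hν
  have hmemν : ∀ k x : ℕ, ((k, x) ∈ ν ↔ x < Ncount D h (k + 1)) := by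
    intro k x
    show (k, x) ∈ ν.cells ↔ _
    rw [hν]
    simp only [mem_filter, Finset.mem_product, mem_range]
    constructor
    · rintro ⟨_, hx⟩; exact hx
    · intro hx
      have hpos : 0 < Ncount D h (k + 1) := by omega
      have hk : k + 1 ≤ h + 1 + D.card := by
        by_contra hcon
        have := hNzero (k + 1) (by omega)
        omega
      have := hNle (k + 1)
      exact ⟨⟨by omega, by omega⟩, hx⟩
  have hrow : ∀ k, ν.rowLen k = Ncount D h (k + 1) := by
    intro k
    apply Nat.le_antisymm
    · by_contra hcon
      push_neg at hcon
      have : (k, Ncount D h (k + 1)) ∈ ν := YoungDiagram.mem_iff_lt_rowLen.2 hcon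
      rw [hmemν] at this
      omega
    · rcases Nat.eq_zero_or_pos (Ncount D h (k + 1)) with hz | hpos
      · omega
      · have : (k, Ncount D h (k + 1) - 1) ∈ ν := (hmemν _ _).2 (by omega)
        rw [YoungDiagram.mem_iff_lt_rowLen] at this
        omega
  refine ⟨ν, ⟨?_, ?_, ?_, ?_, ?_, ?_⟩, ?_⟩
  · intro c hc
    rw [gT, if_neg hc]
  · intro c hc
    rw [gT, if_pos hc]
    by_cases hcd : cdep D c ≤ h
    · rw [if_pos hcd]
      exact cdep_pos hc
    · rw [if_neg hcd]
      have := srT_pos (E := BB D h) c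
      omega
  · intro i j h1 h2
    exact gT_row hD h1 h2
  · intro i j h1 h2
    exact gT_col hD h1 h2
  · intro k
    rw [hrow k]
    rfl
  · intro i j k
    exact glue_lattice hD hnch i j k
  · apply durfee_le_of
    intro i hi
    rw [hmemν] at hi
    by_contra hcon
    push_neg at hcon
    have h1 : Ncount D h (i + 1) ≤ Ncount D h (h + 1) :=
      Ncount_anti hD hnch _ _ (by omega) (by omega)
    have h2 := Ncount_h1_le hD hnch
    omega

end GlueAssemble

section Lower

variable {D : Finset (ℕ × ℕ)} {ν : YoungDiagram} {T : ℕ × ℕ → ℕ}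

lemma rowChainT (hD : Boxed D) (hT : IsLRFilling D ν T) {i j j' : ℕ}
    (h1 : (i, j) ∈ D) (h2 : (i, j') ∈ D) (hj : j ≤ j') : T (i, j) ≤ T (i, j') := by
  obtain ⟨-, -, hrow, -⟩ := hT
  have key : ∀ d j'', j'' = j + d → (i, j'') ∈ D → T (i, j) ≤ T (i, j'') := by
    intro d
    induction d with
    | zero =>
      intro j'' hj'' _
      subst hj''
      simp
    | succ n ih =>
      intro j'' hj'' hmem
      have hmid : (i, j + n) ∈ D := hD h1 hmem le_rfl le_rfl (by omega) (by omega)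
      have h1' := ih (j + n) rfl hmid
      have h2' := hrow i (j + n) hmid (by rw [show j + n + 1 = j'' by omega]; exact hmem)
      rw [show j + n + 1 = j'' by omega] at h2'
      omega
  exact key (j' - j) j' (by omega) h2

lemma colChainT (hD : Boxed D) (hT : IsLRFilling D ν T) {i i' j : ℕ}
    (h1 : (i, j) ∈ D) (h2 : (i', j) ∈ D) (hi : i ≤ i') : T (i, j) + (i' - i) ≤ T (i', j) := by
  obtain ⟨-, -, -, hcol, -⟩ := hT
  have key : ∀ d i'', i'' = i + d → (i'', j) ∈ D → T (i, j) + d ≤ T (i'', j) := by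
    intro d
    induction d with
    | zero =>
      intro i'' hi'' _
      subst hi''
      simp
    | succ n ih =>
      intro i'' hi'' hmem
      have hmid : (i + n, j) ∈ D := hD h1 hmem (by omega) (by omega) le_rfl le_rfl
      have h1' := ih (i + n) rfl hmid
      have h2' := hcol (i + n) j hmid (by rw [show i + n + 1 = i'' by omega]; exact hmem)
      rw [show i + n + 1 = i'' by omega] at h2'
      omega
  have := key (i' - i) i' (by omega) h2
  omega

lemma RS_key (hD : Boxed D) (hT : IsLRFilling D ν T) (w r' : ℕ) (hw : 1 ≤ w)
    (hex : (D.filter (fun c => c.1 = r' ∧ T c = w + 1)).Nonempty) :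
    (D.filter (fun c => c.1 ≤ r' ∧ T c = w + 1)).card ≤
      (D.filter (fun c => c.1 < r' ∧ T c = w)).card := by
  classical
  obtain ⟨m, hm, hmin⟩ := Finset.exists_min_image _ (fun c => c.2) hex
  rw [mem_filter] at hm
  obtain ⟨hmD, hmr, hmval⟩ := hm
  have hlat := hT.2.2.2.2.2 r' m.2 (w - 1)
  rw [show w - 1 + 2 = w + 1 by omega, show w - 1 + 1 = w by omega] at hlat
  have hLeq : D.filter (fun c => c.1 ≤ r' ∧ T c = w + 1) =
      D.filter (fun c => (c.1 < r' ∨ (c.1 = r' ∧ m.2 ≤ c.2)) ∧ T c = w + 1) := by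
    apply Finset.filter_congr
    intro c hc
    constructor
    · rintro ⟨hcr, hval⟩
      rcases Nat.lt_or_ge c.1 r' with hx | hx
      · exact ⟨Or.inl hx, hval⟩
      · have hceq : c.1 = r' := by omega
        have := hmin c (by rw [mem_filter]; exact ⟨hc, hceq, hval⟩)
        exact ⟨Or.inr ⟨hceq, this⟩, hval⟩
    · rintro ⟨hreg, hval⟩
      refine ⟨?_, hval⟩
      rcases hreg with hx | hx
      · omega
      · omega
  have hReq : D.filter (fun c => (c.1 < r' ∨ (c.1 = r' ∧ m.2 ≤ c.2)) ∧ T c = w) =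
      D.filter (fun c => c.1 < r' ∧ T c = w) := by
    apply Finset.filter_congr
    intro c hc
    constructor
    · rintro ⟨hreg, hval⟩
      rcases hreg with hx | ⟨hx, hx2⟩
      · exact ⟨hx, hval⟩
      · exfalso
        have hmem' : (r', c.2) ∈ D := by
          rw [← hx, Prod.mk.eta]
          exact hc
        have hmmem : (r', m.2) ∈ D := by
          rw [← hmr, Prod.mk.eta]
          exact hmD
        have := rowChainT hD hT hmmem hmem' hx2
        rw [show ((r', m.2) : ℕ × ℕ).2 = m.2 from rfl] at this
        have e1 : T (r', m.2) = w + 1 := by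
          rw [← hmr, Prod.mk.eta]; exact hmval
        have e2 : T (r', c.2) = w := by
          rw [← hx, Prod.mk.eta]; exact hval
        omega
    · rintro ⟨hx, hval⟩
      exact ⟨Or.inl hx, hval⟩
  rw [hLeq, ← hReq]
  exact hlat

lemma RS (hD : Boxed D) (hT : IsLRFilling D ν T) (w : ℕ) (hw : 1 ≤ w) : ∀ r' : ℕ,
    (D.filter (fun c => c.1 ≤ r' ∧ T c = w + 1)).card ≤
      (D.filter (fun c => c.1 < r' ∧ T c = w)).card := by
  intro r'
  induction r' with
  | zero =>
    by_cases hex : (D.filter (fun c => c.1 = 0 ∧ T c = w + 1)).Nonempty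
    · exact RS_key hD hT w 0 hw hex
    · have : D.filter (fun c => c.1 ≤ 0 ∧ T c = w + 1) = ∅ := by
        rw [Finset.filter_eq_empty_iff]
        intro c hc hcon
        apply hex
        exact ⟨c, by rw [mem_filter]; exact ⟨hc, by omega, hcon.2⟩⟩
      rw [this]
      simp
  | succ r ih =>
    by_cases hex : (D.filter (fun c => c.1 = r + 1 ∧ T c = w + 1)).Nonempty
    · exact RS_key hD hT w (r + 1) hw hex
    · have hLeq : D.filter (fun c => c.1 ≤ r + 1 ∧ T c = w + 1) =
          D.filter (fun c => c.1 ≤ r ∧ T c = w + 1) := by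
        apply Finset.filter_congr
        intro c hc
        constructor
        · rintro ⟨hcr, hval⟩
          refine ⟨?_, hval⟩
          rcases Nat.lt_or_ge c.1 (r + 1) with hx | hx
          · omega
          · exfalso
            exact hex ⟨c, by rw [mem_filter]; exact ⟨hc, by omega, hval⟩⟩
        · rintro ⟨hcr, hval⟩
          exact ⟨by omega, hval⟩
      rw [hLeq]
      refine le_trans ih (Finset.card_le_card ?_)
      intro c hc
      rw [mem_filter] at hc ⊢
      exact ⟨hc.1, by omega, hc.2.2⟩

lemma anti_of_step (f : ℕ → ℕ) (hstep : ∀ k, f (k + 2) ≤ f (k + 1)) :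
    ∀ v w, 1 ≤ v → v ≤ w → f w ≤ f v := by
  have key : ∀ d v, 1 ≤ v → f (v + d) ≤ f v := by
    intro d
    induction d with
    | zero => intro v _; simp
    | succ n ih =>
      intro v hv
      have h1 : f (v + (n + 1)) ≤ f (v + n) := by
        have := hstep (v + n - 1)
        rw [show v + n - 1 + 2 = v + (n + 1) by omega, show v + n - 1 + 1 = v + n by omega] at this
        exact this
      exact le_trans h1 (ih v hv)
  intro v w hv hvw
  have := key (w - v) v hv
  rw [show v + (w - v) = w by omega] at this
  exact this

lemma count_anti_T (hT : IsLRFilling D ν T) :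
    ∀ v w, 1 ≤ v → v ≤ w →
      (D.filter (fun c => T c = w)).card ≤ (D.filter (fun c => T c = v)).card := by
  apply anti_of_step
  intro k
  have := hT.2.2.2.2.2 ((D.sup Prod.fst) + 1) 0 k
  rw [region_filter_all, region_filter_all] at this
  exact this

lemma T_le_card (hT : IsLRFilling D ν T) {c : ℕ × ℕ} (hc : c ∈ D) : T c ≤ D.card := by
  classical
  have hpos := hT.2.1 c hc
  have hanti := count_anti_T hT
  have hone : ∀ u, 1 ≤ u → u ≤ T c → 1 ≤ (D.filter (fun c' => T c' = u)).card := by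
    intro u h1 h2
    have := hanti u (T c) h1 h2
    have hcc : 1 ≤ (D.filter (fun c' => T c' = T c)).card :=
      Finset.card_pos.2 ⟨c, by rw [mem_filter]; exact ⟨hc, rfl⟩⟩
    omega
  have hdisj : ((Finset.Icc 1 (T c) : Finset ℕ) : Set ℕ).PairwiseDisjoint
      (fun u => D.filter (fun c' => T c' = u)) := by
    intro a _ b _ hab
    refine Finset.disjoint_left.2 ?_
    intro x hx1 hx2
    rw [mem_filter] at hx1 hx2
    exact hab (hx1.2.symm.trans hx2.2)
  have hsub : (Finset.Icc 1 (T c)).biUnion (fun u => D.filter (fun c' => T c' = u)) ⊆ D := by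
    intro x hx
    rw [Finset.mem_biUnion] at hx
    obtain ⟨u, _, hxu⟩ := hx
    exact Finset.mem_filter.1 hxu |>.1
  have hcard := Finset.card_biUnion hdisj
  have hbig : T c ≤ ((Finset.Icc 1 (T c)).biUnion (fun u => D.filter (fun c' => T c' = u))).card := by
    rw [hcard]
    calc T c = ∑ _u ∈ Finset.Icc 1 (T c), 1 := by
          rw [Finset.sum_const, smul_eq_mul, mul_one, Nat.card_Icc]
          omega
    _ ≤ _ := Finset.sum_le_sum (fun u hu => by
        rw [Finset.mem_Icc] at hu
        exact hone u hu.1 hu.2)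
  have := Finset.card_le_card hsub
  omega

lemma lower_bound (hD : Boxed D) (hT : IsLRFilling D ν T) {hh : ℕ} (hpos : 1 ≤ hh)
    {cc : ℕ × ℕ} (hch : Chain D (hh - 1) cc) : hh ≤ durfee ν := by
  classical
  obtain ⟨hr, hq, hchain⟩ := hch
  set r := cc.1 with hrdef
  set q := cc.2 with hqdef
  -- the square
  have hsq : ∀ p s, p ≤ hh - 1 → s ≤ hh - 1 → (r - p, q - s) ∈ D := by
    intro p s hp hs
    have hc1 : (r - max p s, q - max p s) ∈ D := hchain (max p s) (by omega)
    have hc2 : (r, q) ∈ D := by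
      have := hchain 0 (by omega)
      simpa using this
    exact hD hc1 hc2 (by omega) (by omega) (by omega) (by omega)
  set S := D.filter (fun c => c.1 = r ∧ q - (hh - 1) ≤ c.2) with hSdef
  have hSval : ∀ c ∈ S, hh ≤ T c := by
    intro c hc
    rw [hSdef, mem_filter] at hc
    obtain ⟨hcD, hcr, hcq⟩ := hc
    have hqT : hh ≤ T (r, q) := by
      have htop : (r - (hh - 1), q) ∈ D := by
        have := hsq (hh - 1) 0 le_rfl (by omega)
        simpa using this
      have hbot : (r, q) ∈ D := by
        have := hchain 0 (by omega)
        simpa using this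
      have := colChainT hD hT htop hbot (by omega)
      have hp := hT.2.1 _ htop
      omega
    rcases le_or_gt c.2 q with hle | hgt
    · -- column argument
      have htop : (r - (hh - 1), c.2) ∈ D := by
        have := hsq (hh - 1) (q - c.2) le_rfl (by omega)
        rw [show q - (q - c.2) = c.2 by omega] at this
        exact this
      have hbot : (r, c.2) ∈ D := by
        rw [← hcr, Prod.mk.eta]; exact hcD
      have := colChainT hD hT htop hbot (by omega)
      have hp := hT.2.1 _ htop
      have : hh ≤ T (r, c.2) := by omega
      rw [← hcr, Prod.mk.eta] at this
      exact this
    · -- row argument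
      have hbotq : (r, q) ∈ D := by
        have := hchain 0 (by omega)
        simpa using this
      have hbot : (r, c.2) ∈ D := by
        rw [← hcr, Prod.mk.eta]; exact hcD
      have := rowChainT hD hT hbotq hbot (by omega)
      have : hh ≤ T (r, c.2) := by omega
      rw [← hcr, Prod.mk.eta] at this
      exact this
  have hScard : hh ≤ S.card := by
    calc hh = (range hh).card := (card_range hh).symm
    _ ≤ S.card := by
      apply Finset.card_le_card_of_injOn (fun p => (r, q - p))
      · intro p hp
        rw [Finset.mem_coe, mem_range] at hp
        rw [hSdef, Finset.mem_coe, mem_filter]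
        dsimp only
        refine ⟨hsq 0 p (by omega) (by omega), rfl, by omega⟩
      · intro p1 hp1 p2 hp2 heq
        rw [Finset.mem_coe, mem_range] at hp1 hp2
        have := congrArg Prod.snd heq
        simp only at this
        omega
  -- the counting claim
  have claim : ∀ n w, 1 ≤ w → D.card + 1 ≤ w + n →
      ∃ b, (S.filter (fun c => w ≤ T c)).card ≤
        (D.filter (fun c => (c.1 < r ∨ (c.1 = r ∧ b ≤ c.2)) ∧ T c = w)).card := by
    intro n
    induction n with
    | zero =>
      intro w hw1 hw2
      refine ⟨0, ?_⟩
      have : S.filter (fun c => w ≤ T c) = ∅ := by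
        rw [Finset.filter_eq_empty_iff]
        intro c hc hcon
        rw [hSdef, mem_filter] at hc
        have := T_le_card hT hc.1
        omega
      rw [this]
      simp
    | succ n ih =>
      intro w hw1 hw2
      obtain ⟨b', hb'⟩ := ih (w + 1) (by omega) (by omega)
      -- split the count
      have hsplit : (S.filter (fun c => w ≤ T c)).card =
          (S.filter (fun c => T c = w)).card + (S.filter (fun c => w + 1 ≤ T c)).card := by
        rw [← Finset.card_union_of_disjoint (by
          rw [Finset.disjoint_left]
          intro x hx1 hx2
          rw [mem_filter] at hx1 hx2
          omega)]
        congr 1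
        rw [← Finset.filter_or]
        apply Finset.filter_congr
        intro c _
        constructor
        · intro hx; omega
        · intro hx; omega
      -- chain through RS
      have hchain2 : (S.filter (fun c => w + 1 ≤ T c)).card ≤
          (D.filter (fun c => c.1 < r ∧ T c = w)).card := by
        calc (S.filter (fun c => w + 1 ≤ T c)).card
            ≤ (D.filter (fun c => (c.1 < r ∨ (c.1 = r ∧ b' ≤ c.2)) ∧ T c = w + 1)).card := hb'
        _ ≤ (D.filter (fun c => c.1 ≤ r ∧ T c = w + 1)).card := by
            apply Finset.card_le_card
            intro c hc
            rw [mem_filter] at hc ⊢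
            refine ⟨hc.1, ?_, hc.2.2⟩
            rcases hc.2.1 with hx | hx
            · omega
            · omega
        _ ≤ (D.filter (fun c => c.1 < r ∧ T c = w)).card := RS hD hT w hw1 r
      by_cases hne : (S.filter (fun c => T c = w)).Nonempty
      · obtain ⟨m, hm, hmin⟩ := Finset.exists_min_image _ (fun c => c.2) hne
        refine ⟨m.2, ?_⟩
        have hregion : D.filter (fun c => (c.1 < r ∨ (c.1 = r ∧ m.2 ≤ c.2)) ∧ T c = w) =
            D.filter (fun c => c.1 < r ∧ T c = w) ∪
              D.filter (fun c => (c.1 = r ∧ m.2 ≤ c.2) ∧ T c = w) := by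
          rw [← Finset.filter_or]
          apply Finset.filter_congr
          intro c _
          constructor
          · rintro ⟨hx | hx, hval⟩
            · exact Or.inl ⟨hx, hval⟩
            · exact Or.inr ⟨hx, hval⟩
          · rintro (⟨hx, hval⟩ | ⟨hx, hval⟩)
            · exact ⟨Or.inl hx, hval⟩
            · exact ⟨Or.inr hx, hval⟩
        rw [hregion, Finset.card_union_of_disjoint (by
          rw [Finset.disjoint_left]
          intro x hx1 hx2
          rw [mem_filter] at hx1 hx2
          obtain ⟨-, hx1a, -⟩ := hx1
          obtain ⟨-, ⟨hx2a, -⟩, -⟩ := hx2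
          omega)]
        have hsecond : (S.filter (fun c => T c = w)).card ≤
            (D.filter (fun c => (c.1 = r ∧ m.2 ≤ c.2) ∧ T c = w)).card := by
          apply Finset.card_le_card
          intro c hc
          have hcmem := hc
          rw [mem_filter, hSdef, mem_filter] at hc
          rw [mem_filter]
          refine ⟨hc.1.1, ⟨hc.1.2.1, hmin c hcmem⟩, hc.2⟩
        omega
      · refine ⟨0, ?_⟩
        have hzero : (S.filter (fun c => T c = w)).card = 0 := by
          rw [Finset.card_eq_zero]
          rw [Finset.not_nonempty_iff_eq_empty] at hne
          exact hne
        calc (S.filter (fun c => w ≤ T c)).card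
            = (S.filter (fun c => w + 1 ≤ T c)).card := by omega
        _ ≤ (D.filter (fun c => c.1 < r ∧ T c = w)).card := hchain2
        _ ≤ _ := by
            apply Finset.card_le_card
            intro c hc
            rw [mem_filter] at hc ⊢
            exact ⟨hc.1, Or.inl hc.2.1, hc.2.2⟩
  obtain ⟨b, hb⟩ := claim (D.card + 1) hh hpos (by omega)
  have hSfull : S.filter (fun c => hh ≤ T c) = S := by
    apply Finset.filter_true_of_mem
    exact hSval
  have hfinal : hh ≤ (D.filter (fun c => T c = hh)).card := by
    calc hh ≤ S.card := hScard
    _ = (S.filter (fun c => hh ≤ T c)).card := by rw [hSfull]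
    _ ≤ (D.filter (fun c => (c.1 < r ∨ (c.1 = r ∧ b ≤ c.2)) ∧ T c = hh)).card := hb
    _ ≤ (D.filter (fun c => T c = hh)).card := by
        apply Finset.card_le_card
        intro c hc
        rw [mem_filter] at hc ⊢
        exact ⟨hc.1, hc.2.2⟩
  have hrowlen : hh ≤ ν.rowLen (hh - 1) := by
    have := hT.2.2.2.2.1 (hh - 1)
    rw [show hh - 1 + 1 = hh by omega] at this
    omega
  apply durfee_ge_of
  intro i hi
  apply ν.up_left_mem (show i ≤ hh - 1 by omega) (show i ≤ hh - 1 by omega)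
  rw [YoungDiagram.mem_iff_lt_rowLen]
  omega

end Lower

section Final

lemma isLR_finite (D : Finset (ℕ × ℕ)) (ν : YoungDiagram) :
    {T : ℕ × ℕ → ℕ | IsLRFilling D ν T}.Finite := by
  classical
  set M := ν.colLen 0 + 1 with hM
  have hval : ∀ T ∈ {T : ℕ × ℕ → ℕ | IsLRFilling D ν T}, ∀ c ∈ D, T c < M := by
    intro T hT c hc
    have hpos := hT.2.1 c hc
    have h5 := hT.2.2.2.2.1 (T c - 1)
    have hmem : (D.filter (fun c' => T c' = (T c - 1) + 1)).Nonempty :=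
      ⟨c, by rw [mem_filter]; exact ⟨hc, by omega⟩⟩
    have h1 : 0 < ν.rowLen (T c - 1) := by
      rw [← h5]
      exact Finset.card_pos.2 hmem
    have h2 : (T c - 1, 0) ∈ ν := YoungDiagram.mem_iff_lt_rowLen.2 h1
    have h3 := YoungDiagram.mem_iff_lt_colLen.1 h2
    omega
  set F : ((a : ℕ × ℕ) → a ∈ D → ℕ) → (ℕ × ℕ → ℕ) :=
    fun g c => if hc : c ∈ D then g c hc else 0 with hF
  have hsub : {T : ℕ × ℕ → ℕ | IsLRFilling D ν T} ⊆
      F '' ↑(D.pi (fun _ => range M)) := by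
    intro T hT
    refine ⟨fun c _ => T c, ?_, ?_⟩
    · rw [Finset.mem_coe, Finset.mem_pi]
      intro a ha
      rw [mem_range]
      exact hval T hT a ha
    · funext c
      rw [hF]
      by_cases hc : c ∈ D
      · simp only [dif_pos hc]
      · simp only [dif_neg hc]
        exact (hT.1 c hc).symm
  exact Set.Finite.subset (Set.Finite.image F (Finset.finite_toSet _)) hsub

lemma lr_exists_of_ne {lam mu ν : YoungDiagram} (hne : lr lam mu ν ≠ 0) :
    ∃ T, IsLRFilling (skewCells lam mu) ν T := by
  by_contra hcon
  push_neg at hcon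
  apply hne
  rw [lr, skewCoeff]
  have : {T : ℕ × ℕ → ℕ | IsLRFilling (skewCells lam mu) ν T} = ∅ := by
    rw [Set.eq_empty_iff_forall_notMem]
    exact fun T hT => hcon T hT
  rw [this, Set.ncard_empty]

lemma lr_ne_zero_of_filling {lam mu ν : YoungDiagram} (T : ℕ × ℕ → ℕ)
    (hT : IsLRFilling (skewCells lam mu) ν T) : lr lam mu ν ≠ 0 := by
  rw [lr, skewCoeff]
  have hfin := isLR_finite (skewCells lam mu) ν
  have := (Set.ncard_pos hfin).2 ⟨T, hT⟩
  omega

lemma mem_diag_iff_hl {ν : YoungDiagram} {i : ℕ} : (i, i) ∈ ν ↔ 1 ≤ hl ν i := by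
  rw [hl]
  constructor
  · intro hmem
    have h1 := YoungDiagram.mem_iff_lt_rowLen.1 hmem
    have h2 := YoungDiagram.mem_iff_lt_colLen.1 hmem
    omega
  · intro hpos
    by_contra hmem
    have h1 : ν.rowLen i ≤ i := by
      by_contra hc
      push_neg at hc
      exact hmem (YoungDiagram.mem_iff_lt_rowLen.2 hc)
    have h2 : ν.colLen i ≤ i := by
      by_contra hc
      push_neg at hc
      exact hmem (YoungDiagram.mem_iff_lt_colLen.2 hc)
    omega

end Final

/-- Let `h` be the number of nonempty northwest ribbons of the skew diagram `lam/mu`.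
Every `ν` with `c(lam; mu, ν) ≠ 0` has Durfee size at least `h`; the bound is attained,
so the minimal Durfee size of a constituent is exactly `h`; and the `ν` with maximal
hook length partition `hl(ν) = π_nw(lam/mu)` have Durfee size exactly `h`. -/
theorem stmt15 (lam mu : YoungDiagram) (hmu : mu ≤ lam) (h : ℕ)
    (hh : ∀ k, (nw (skewCells lam mu) k).Nonempty ↔ k < h) :
    (∀ ν : YoungDiagram, lr lam mu ν ≠ 0 → h ≤ durfee ν) ∧
    IsLeast {d | ∃ ν : YoungDiagram, lr lam mu ν ≠ 0 ∧ durfee ν = d} h ∧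
    (∀ ν : YoungDiagram, lr lam mu ν ≠ 0 →
      (∀ i, hl ν i = pinw (skewCells lam mu) i) → durfee ν = h) := by
  classical
  set A := skewCells lam mu with hA
  have hDA : Boxed A := boxed_skewCells lam mu
  -- no chain of length h+1
  have hnoch : ∀ c, ¬ Chain A h c := by
    intro c hch
    have h1 : (nwRest A h).Nonempty := ⟨c, mem_nwRest.2 hch⟩
    have h2 : (nw A h).Nonempty := nw1_nonempty h1
    have := (hh h).1 h2
    omega
  -- part 1
  have part1 : ∀ ν : YoungDiagram, lr lam mu ν ≠ 0 → h ≤ durfee ν := by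
    intro ν hne
    rcases Nat.eq_zero_or_pos h with hz | hpos
    · omega
    · obtain ⟨T, hT⟩ := lr_exists_of_ne hne
      have hch : ((nw A (h - 1)).Nonempty) := (hh (h - 1)).2 (by omega)
      obtain ⟨cc, hcc⟩ := hch
      have hccA : cc ∈ nwRest A (h - 1) := Finset.mem_filter.1 hcc |>.1
      exact lower_bound hDA hT hpos (mem_nwRest.1 hccA)
  refine ⟨part1, ⟨?_, ?_⟩, ?_⟩
  · -- membership in the set
    obtain ⟨ν0, hfill, hdle⟩ := glue_exists hDA hnoch
    refine ⟨ν0, lr_ne_zero_of_filling _ hfill, ?_⟩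
    exact le_antisymm hdle (part1 ν0 (lr_ne_zero_of_filling _ hfill))
  · -- lower bound
    rintro d ⟨ν, hν, rfl⟩
    exact part1 ν hν
  · -- part 3
    intro ν _ hhl
    have hmem : ∀ i, ((i, i) ∈ ν ↔ i < h) := by
      intro i
      rw [mem_diag_iff_hl, hhl i]
      constructor
      · intro hp
        have : (nw A i).Nonempty := by
          rw [← Finset.card_pos]
          exact hp
        exact (hh i).1 this
      · intro hlt
        have : (nw A i).Nonempty := (hh i).2 hlt
        rw [pinw]
        exact Finset.card_pos.2 this
    exact le_antisymm (durfee_le_of (fun i hi => (hmem i).1 hi))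
      (durfee_ge_of (fun i hi => (hmem i).2 hi))
end SkewHooks
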